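/- Let $n$ and $m$ be integers with $0 < m < n$. Then $\sum_{h/k} \sum_{s=1}^{\lfloor \min\{m/h,\,(n-m)/(k-h)\} \rfloor} \binom{m}{s h}\binom{n-m}{s(k-h)} = \sum_{h/k} \sum_{s=1}^{\lfloor \min\{(n-m)/h,\,m/(k-h)\} \rfloor} \binom{n-m}{s h}\binom{m}{s(k-h)} = 2^n - 2^m - 2^{n-m} + 1$, where the first outer sum ranges over all reduced fractions $h/k \in \mathcal{F}(\mathbb{B}(n),m)$ with $0/1 < h/k < 1/1$ and the second outer sum ranges over all reduced fractions $h/k \in \mathcal{F}(\mathbb{B}(n),n-m)$ with $0/1 < h/k < 1/1$. -/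
import Mathlib

lemma sum_Icc_choose_eq (M : ℕ) : ∑ a ∈ Finset.Icc 1 M, M.choose a = 2 ^ M - 1 := by
  have hr : Finset.range (M+1) = insert 0 (Finset.Icc 1 M) := by
    ext x; simp [Nat.lt_succ_iff]; omega
  have h := Nat.sum_range_choose M
  rw [hr, Finset.sum_insert (by simp)] at h
  simp only [Nat.choose_zero_right] at h
  omega

lemma farey_key (M N : ℕ) (hM : 0 < M) (hN : 0 < N) :
    ∑ p ∈ (Finset.Icc 1 (M+N) ×ˢ Finset.Icc 1 (M+N)).filter
        (fun p => p.1 < p.2 ∧ Nat.Coprime p.1 p.2 ∧ p.1 ≤ M ∧ p.2 - p.1 ≤ N),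
      ∑ s ∈ Finset.Icc 1 (min (M / p.1) (N / (p.2 - p.1))),
        (M.choose (s * p.1)) * (N.choose (s * (p.2 - p.1)))
      = (2 ^ M - 1) * (2 ^ N - 1) := by
  have hprod : (2 ^ M - 1) * (2 ^ N - 1)
      = ∑ q ∈ Finset.Icc 1 M ×ˢ Finset.Icc 1 N, (M.choose q.1) * (N.choose q.2) := by
    rw [Finset.sum_product, ← Finset.sum_mul_sum, sum_Icc_choose_eq, sum_Icc_choose_eq]
  rw [hprod, Finset.sum_sigma']
  refine Finset.sum_nbij' (fun x => (x.2 * x.1.1, x.2 * (x.1.2 - x.1.1)))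
    (fun q => ⟨(q.1 / Nat.gcd q.1 q.2, q.1 / Nat.gcd q.1 q.2 + q.2 / Nat.gcd q.1 q.2),
      Nat.gcd q.1 q.2⟩) ?_ ?_ ?_ ?_ (fun a _ => rfl)
  · rintro ⟨⟨h, k⟩, s⟩ hx
    simp only [Finset.mem_sigma, Finset.mem_filter, Finset.mem_product, Finset.mem_Icc] at hx ⊢
    obtain ⟨⟨⟨⟨h1, h2⟩, ⟨k1, k2⟩⟩, hlt, hcop, hhm, hkn⟩, hs1, hs2⟩ := hx
    have hd : 0 < k - h := by omega
    have hsm : s * h ≤ M := by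
      have := (Nat.le_div_iff_mul_le h1).mp (le_trans hs2 (min_le_left _ _)); omega
    have hsn : s * (k - h) ≤ N := by
      have := (Nat.le_div_iff_mul_le hd).mp (le_trans hs2 (min_le_right _ _)); omega
    exact ⟨⟨Nat.mul_pos hs1 h1, hsm⟩, Nat.mul_pos hs1 hd, hsn⟩
  · rintro ⟨a, b⟩ hq
    simp only [Finset.mem_sigma, Finset.mem_filter, Finset.mem_product, Finset.mem_Icc] at hq ⊢
    obtain ⟨⟨ha1, ha2⟩, hb1, hb2⟩ := hq
    set g := Nat.gcd a b with hg
    have hg0 : 0 < g := Nat.gcd_pos_of_pos_left _ (by omega)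
    have hda : g ∣ a := Nat.gcd_dvd_left a b
    have hdb : g ∣ b := Nat.gcd_dvd_right a b
    have hagh : g * (a / g) = a := Nat.mul_div_cancel' hda
    have hbgh : g * (b / g) = b := Nat.mul_div_cancel' hdb
    have hh1 : 0 < a / g := Nat.div_pos (Nat.le_of_dvd (by omega) hda) hg0
    have hd1 : 0 < b / g := Nat.div_pos (Nat.le_of_dvd (by omega) hdb) hg0
    have hha : a / g ≤ a := Nat.div_le_self a g
    have hdb2 : b / g ≤ b := Nat.div_le_self b g
    have hcop : Nat.Coprime (a / g) (b / g) := Nat.coprime_div_gcd_div_gcd hg0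
    have he : a / g + b / g - a / g = b / g := by omega
    refine ⟨⟨⟨⟨hh1, by omega⟩, by omega, by omega⟩, by omega,
      ?_, by omega, by rw [he]; omega⟩, hg0, le_min ?_ ?_⟩
    · have h2 : a / g + b / g = b / g + a / g := by omega
      rw [h2]
      exact Nat.coprime_add_self_right.mpr hcop
    · rw [Nat.le_div_iff_mul_le hh1, hagh]; exact ha2
    · rw [he, Nat.le_div_iff_mul_le hd1, hbgh]; exact hb2
  · rintro ⟨⟨h, k⟩, s⟩ hx
    simp only [Finset.mem_sigma, Finset.mem_filter, Finset.mem_product, Finset.mem_Icc] at hx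
    obtain ⟨⟨⟨⟨h1, h2⟩, ⟨k1, k2⟩⟩, hlt, hcop, hhm, hkn⟩, hs1, hs2⟩ := hx
    have hd : 0 < k - h := by omega
    have hcd : Nat.gcd h (k - h) = 1 := by
      have hk : k = (k - h) + h := by omega
      rw [hk] at hcop
      exact Nat.coprime_add_self_right.mp hcop
    have hgeq : Nat.gcd (s * h) (s * (k - h)) = s := by
      rw [Nat.gcd_mul_left, hcd, mul_one]
    have hs0 : 0 < s := hs1
    simp only [hgeq, Nat.mul_div_cancel_left _ hs0]
    have hk : h + (k - h) = k := by omega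
    rw [hk]
  · rintro ⟨a, b⟩ hq
    simp only [Finset.mem_product, Finset.mem_Icc] at hq
    obtain ⟨⟨ha1, ha2⟩, hb1, hb2⟩ := hq
    have hg0 : 0 < Nat.gcd a b := Nat.gcd_pos_of_pos_left _ (by omega)
    have he : a / Nat.gcd a b + b / Nat.gcd a b - a / Nat.gcd a b = b / Nat.gcd a b :=
      Nat.add_sub_cancel_left _ _
    simp only [he, Nat.mul_div_cancel' (Nat.gcd_dvd_left a b),
      Nat.mul_div_cancel' (Nat.gcd_dvd_right a b)]

lemma pow_sub_identity (M N : ℕ) (hM : 0 < M) (hN : 0 < N) :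
    (2 ^ M - 1) * (2 ^ N - 1) = 2 ^ (M + N) - 2 ^ M - 2 ^ N + 1 := by
  have h1 : 1 ≤ 2 ^ M := Nat.one_le_two_pow
  have h2 : 1 ≤ 2 ^ N := Nat.one_le_two_pow
  have hp : 2 ^ (M + N) = 2 ^ M * 2 ^ N := pow_add 2 M N
  obtain ⟨a, ha⟩ := Nat.exists_eq_add_of_le h1
  obtain ⟨b, hb⟩ := Nat.exists_eq_add_of_le h2
  have hp2 : 2 ^ (M + N) = a * b + a + b + 1 := by rw [pow_add, ha, hb]; ring
  have ha1 : 1 ≤ a := by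
    have : 2 ≤ 2 ^ M := by
      calc 2 = 2 ^ 1 := rfl
      _ ≤ 2 ^ M := Nat.pow_le_pow_right (by norm_num) hM
    omega
  have hb1 : 1 ≤ b := by
    have : 2 ≤ 2 ^ N := by
      calc 2 = 2 ^ 1 := rfl
      _ ≤ 2 ^ N := Nat.pow_le_pow_right (by norm_num) hN
    omega
  have hab : 1 ≤ a * b := Nat.mul_pos ha1 hb1
  rw [ha, hb, hp2, Nat.add_sub_cancel_left, Nat.add_sub_cancel_left]
  omega

/-- Identity for fractions of the Farey subsequences `𝓕(𝔹(n), m)` and `𝓕(𝔹(n), n-m)`.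
The outer sums range over reduced fractions `h/k` (coprime pairs, `0 < h/k < 1`, `k ≤ n`)
with `h ≤ m`, `k - h ≤ n - m` (resp. `h ≤ n - m`, `k - h ≤ m`). -/
theorem fareyB_binomial_identity (n m : ℕ) (hm : 0 < m) (hmn : m < n) :
    (∑ p ∈ (Finset.Icc 1 n ×ˢ Finset.Icc 1 n).filter
        (fun p => p.1 < p.2 ∧ Nat.Coprime p.1 p.2 ∧ p.1 ≤ m ∧ p.2 - p.1 ≤ n - m),
      ∑ s ∈ Finset.Icc 1 (min (m / p.1) ((n - m) / (p.2 - p.1))),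
        (m.choose (s * p.1)) * ((n - m).choose (s * (p.2 - p.1)))
      = 2 ^ n - 2 ^ m - 2 ^ (n - m) + 1) ∧
    (∑ p ∈ (Finset.Icc 1 n ×ˢ Finset.Icc 1 n).filter
        (fun p => p.1 < p.2 ∧ Nat.Coprime p.1 p.2 ∧ p.1 ≤ n - m ∧ p.2 - p.1 ≤ m),
      ∑ s ∈ Finset.Icc 1 (min ((n - m) / p.1) (m / (p.2 - p.1))),
        ((n - m).choose (s * p.1)) * (m.choose (s * (p.2 - p.1)))
      = 2 ^ n - 2 ^ m - 2 ^ (n - m) + 1) := by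
  have hN : 0 < n - m := by omega
  constructor
  · have h := farey_key m (n - m) hm hN
    have hn : m + (n - m) = n := by omega
    rw [hn] at h
    rw [h, pow_sub_identity _ _ hm hN, hn]
  · have h := farey_key (n - m) m hN hm
    have hn : (n - m) + m = n := by omega
    rw [hn] at h
    rw [h, pow_sub_identity _ _ hN hm, hn]
    omega
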